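/- In the (2,2,2) scenario, the deterministic product boxes P1, P3, P4 each belong to Q_2, and for all nonnegative reals c1, c3, c4 with c1 + c3 + c4 = 1, the mixture c1 • P1 + c3 • P3 + c4 • P4 belongs to Q_2 if and only if c1 = 0 or c3 = 0 or c4 = 0. In particular, Q_2 in the (2,2,2) scenario is not convex. -/

import Mathlib

open Matrix Kronecker ComplexOrder

/-- A (2,m,v) box: a family of conditional probability distributions. -/
def IsBox (m v : ℕ) (p : Fin m → Fin m → Fin v → Fin v → ℝ) : Prop :=
  (∀ x y a b, 0 ≤ p x y a b) ∧ ∀ x y, ∑ a, ∑ b, p x y a b = 1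

/-- A product box: `p x y a b = f x a * g y b` for local response functions `f`, `g`. -/
def IsProductBox (m v : ℕ) (p : Fin m → Fin m → Fin v → Fin v → ℝ) : Prop :=
  ∃ f g : Fin m → Fin v → ℝ,
    (∀ x a, 0 ≤ f x a) ∧ (∀ y b, 0 ≤ g y b) ∧
    (∀ x, ∑ a, f x a = 1) ∧ (∀ y, ∑ b, g y b = 1) ∧
    ∀ x y a b, p x y a b = f x a * g y b

/-- Membership in `Q_d`: the box is realizable by a shared quantum state of local
dimension `d` together with local POVMs. -/
def IsQuantumBox (d m v : ℕ) (p : Fin m → Fin m → Fin v → Fin v → ℝ) : Prop :=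
  ∃ (ρ : Matrix ((Fin d) × (Fin d)) ((Fin d) × (Fin d)) ℂ)
    (A B : Fin m → Fin v → Matrix (Fin d) (Fin d) ℂ),
    ρ.PosSemidef ∧ ρ.trace = 1 ∧
    (∀ x a, (A x a).PosSemidef) ∧ (∀ x, ∑ a, A x a = 1) ∧
    (∀ y b, (B y b).PosSemidef) ∧ (∀ y, ∑ b, B y b = 1) ∧
    ∀ x y a b, (ρ * (A x a ⊗ₖ B y b)).trace = (p x y a b : ℂ)

/-- Membership in `L_N`: the box is realizable using shared classical randomness
of dimension `N`. -/
def IsLocalBox (N m v : ℕ) (p : Fin m → Fin m → Fin v → Fin v → ℝ) : Prop :=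
  ∃ (w : Fin N → ℝ) (f g : Fin N → Fin m → Fin v → ℝ),
    (∀ l, 0 ≤ w l) ∧ (∑ l, w l = 1) ∧
    (∀ l x a, 0 ≤ f l x a) ∧ (∀ l y b, 0 ≤ g l y b) ∧
    (∀ l x, ∑ a, f l x a = 1) ∧ (∀ l y, ∑ b, g l y b = 1) ∧
    ∀ x y a b, p x y a b = ∑ l, w l * f l x a * g l y b

/-- The deterministic box `P1`: both parties always output `1`. -/
def P1 : Fin 2 → Fin 2 → Fin 2 → Fin 2 → ℝ :=
  fun _x _y a b => if a = 1 ∧ b = 1 then 1 else 0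

/-- The deterministic box `P3`: each party outputs the negation of its input. -/
def P3 : Fin 2 → Fin 2 → Fin 2 → Fin 2 → ℝ :=
  fun x y a b => if a = 1 - x ∧ b = 1 - y then 1 else 0

/-- The deterministic box `P4`: each party outputs its input. -/
def P4 : Fin 2 → Fin 2 → Fin 2 → Fin 2 → ℝ :=
  fun x y a b => if a = x ∧ b = y then 1 else 0

/-! ### Auxiliary lemmas -/

lemma posSemidef_iff_eq_transpose_mul_self {n : Type*} [Fintype n] [DecidableEq n]
    {A : Matrix n n ℂ} : A.PosSemidef ↔ ∃ B : Matrix n n ℂ, A = Bᴴ * B := by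
  open scoped MatrixOrder in
  constructor
  · intro hA
    exact CStarAlgebra.nonneg_iff_eq_star_mul_self.mp hA.nonneg
  · rintro ⟨B, rfl⟩
    exact posSemidef_conjTranspose_mul_self B

lemma trace_ctm_self_eq_zero {m n : Type*} [Fintype m] [Fintype n]
    (X : Matrix m n ℂ) (h : (Xᴴ * X).trace = 0) : X = 0 := by
  have hsum : ∑ j : n, star (fun i => X i j) ⬝ᵥ (fun i => X i j) = 0 := by
    rw [← h]
    simp [Matrix.trace, Matrix.diag, Matrix.mul_apply, dotProduct, conjTranspose_apply]
  have hcol : ∀ j : n, star (fun i => X i j) ⬝ᵥ (fun i => X i j) = 0 := by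
    intro j
    exact (Finset.sum_eq_zero_iff_of_nonneg
      (fun j _ => dotProduct_star_self_nonneg _)).mp hsum j (Finset.mem_univ j)
  ext i j
  have := dotProduct_star_self_eq_zero.mp (hcol j)
  exact congrFun this i

lemma mul_eq_zero_of_trace_eq_zero {n : Type*} [Fintype n] [DecidableEq n]
    {ρ M : Matrix n n ℂ} (hρ : ρ.PosSemidef) (hM : M.PosSemidef)
    (h : (ρ * M).trace = 0) : ρ * M = 0 ∧ M * ρ = 0 := by
  obtain ⟨S, hS⟩ := posSemidef_iff_eq_transpose_mul_self.mp hρ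
  obtain ⟨C, hC⟩ := posSemidef_iff_eq_transpose_mul_self.mp hM
  have key : S * Cᴴ = 0 := by
    apply trace_ctm_self_eq_zero
    have e1 : (S * Cᴴ)ᴴ * (S * Cᴴ) = C * ((Sᴴ * S) * Cᴴ) := by
      simp [Matrix.mul_assoc]
    rw [e1, Matrix.trace_mul_comm, ← h, hS, hC]
    simp [Matrix.mul_assoc]
  constructor
  · rw [hS, hC]
    calc Sᴴ * S * (Cᴴ * C) = Sᴴ * ((S * Cᴴ) * C) := by simp [Matrix.mul_assoc]
    _ = 0 := by rw [key]; simp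
  · have key' : C * Sᴴ = 0 := by
      have : (S * Cᴴ)ᴴ = 0 := by rw [key]; simp
      simpa using this
    rw [hS, hC]
    calc Cᴴ * C * (Sᴴ * S) = Cᴴ * ((C * Sᴴ) * S) := by simp [Matrix.mul_assoc]
    _ = 0 := by rw [key']; simp

lemma trace_mul_ne_zero_of_sq {n : Type*} [Fintype n] [DecidableEq n]
    {ρ M : Matrix n n ℂ} (hρ : ρ.PosSemidef) (hM : M.IsHermitian)
    (h : (ρ * M).trace ≠ 0) : (ρ * (M * M)).trace ≠ 0 := by
  intro h0
  apply h
  obtain ⟨S, hS⟩ := posSemidef_iff_eq_transpose_mul_self.mp hρ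
  have key : M * Sᴴ = 0 := by
    apply trace_ctm_self_eq_zero
    have e1 : (M * Sᴴ)ᴴ * (M * Sᴴ) = S * (M * (M * Sᴴ)) := by
      simp [Matrix.mul_assoc, hM.eq]
    rw [e1, ← h0, hS]
    rw [show S * (M * (M * Sᴴ)) = S * (M * M) * Sᴴ by simp [Matrix.mul_assoc],
      Matrix.trace_mul_cycle]
  have hSM : S * M = 0 := by
    have : (M * Sᴴ)ᴴ = 0 := by rw [key]; simp
    simpa [hM.eq] using this
  rw [hS]
  calc (Sᴴ * S * M).trace = (Sᴴ * (S * M)).trace := by rw [Matrix.mul_assoc]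
  _ = 0 := by rw [hSM]; simp

lemma kron_conjTranspose {m n : Type*} [Fintype m] [Fintype n]
    (A : Matrix m m ℂ) (B : Matrix n n ℂ) : (A ⊗ₖ B)ᴴ = Aᴴ ⊗ₖ Bᴴ := by
  ext ⟨i,j⟩ ⟨k,l⟩
  simp [conjTranspose_apply, kroneckerMap_apply, mul_comm]

lemma posSemidef_kron {m n : Type*} [Fintype m] [Fintype n] [DecidableEq m] [DecidableEq n]
    {A : Matrix m m ℂ} {B : Matrix n n ℂ} (hA : A.PosSemidef) (hB : B.PosSemidef) :
    (A ⊗ₖ B).PosSemidef := by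
  obtain ⟨C, hC⟩ := posSemidef_iff_eq_transpose_mul_self.mp hA
  obtain ⟨D, hD⟩ := posSemidef_iff_eq_transpose_mul_self.mp hB
  rw [hC, hD]
  have : (Cᴴ * C) ⊗ₖ (Dᴴ * D) = (C ⊗ₖ D)ᴴ * (C ⊗ₖ D) := by
    rw [Matrix.mul_kronecker_mul, kron_conjTranspose]
  rw [this]
  exact posSemidef_conjTranspose_mul_self _

/-- Partial trace over the first tensor factor. -/
noncomputable def ptrA (R : Matrix (Fin 2 × Fin 2) (Fin 2 × Fin 2) ℂ) :
    Matrix (Fin 2) (Fin 2) ℂ :=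
  Matrix.of fun y b => ∑ x : Fin 2, R (x, y) (x, b)

lemma ptrA_one_kron_mul (M : Matrix (Fin 2) (Fin 2) ℂ)
    (R : Matrix (Fin 2 × Fin 2) (Fin 2 × Fin 2) ℂ) :
    ptrA ((1 ⊗ₖ M) * R) = M * ptrA R := by
  ext y b
  simp [ptrA, Matrix.mul_apply, Fintype.sum_prod_type, Fin.sum_univ_two,
    kroneckerMap_apply, Matrix.one_apply]
  ring

lemma ptrA_trace (R : Matrix (Fin 2 × Fin 2) (Fin 2 × Fin 2) ℂ) :
    (ptrA R).trace = R.trace := by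
  simp only [ptrA, Matrix.trace, Matrix.diag, Matrix.of_apply, Fintype.sum_prod_type]
  exact Finset.sum_comm

lemma ptrA_zero : ptrA 0 = 0 := by
  ext y b; simp [ptrA]

lemma matrix_eq_zero_of_orthogonal_kernel (D : Matrix (Fin 2) (Fin 2) ℂ) (u v : Fin 2 → ℂ)
    (hu : u ≠ 0) (hv : v ≠ 0) (huv : star u ⬝ᵥ v = 0) (hvu : star v ⬝ᵥ u = 0)
    (hDu : D *ᵥ u = 0) (hDv : D *ᵥ v = 0) : D = 0 := by
  set U : Matrix (Fin 2) (Fin 2) ℂ := Matrix.of fun i j => if j = 0 then u i else v i with hUdef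
  have hDU : D * U = 0 := by
    ext i j
    rw [Matrix.mul_apply]
    fin_cases j
    · have := congrFun hDu i
      simpa [hUdef, Matrix.mulVec, dotProduct] using this
    · have := congrFun hDv i
      simpa [hUdef, Matrix.mulVec, dotProduct] using this
  have hdet : U.det ≠ 0 := by
    have h2 : (Uᴴ * U).det ≠ 0 := by
      have e : (Uᴴ * U).det =
          (star u ⬝ᵥ u) * (star v ⬝ᵥ v) - (star u ⬝ᵥ v) * (star v ⬝ᵥ u) := by
        simp [Matrix.det_fin_two, Matrix.mul_apply, Matrix.conjTranspose_apply,
          Fin.sum_univ_two, dotProduct, hUdef]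
        ring
      rw [e, huv, hvu]
      simpa using mul_ne_zero
        (fun h => hu (dotProduct_star_self_eq_zero.mp h))
        (fun h => hv (dotProduct_star_self_eq_zero.mp h))
    intro h0
    rw [Matrix.det_mul, Matrix.det_conjTranspose, h0] at h2
    simp at h2
  have hinv : U * U⁻¹ = 1 := Matrix.mul_nonsing_inv U (isUnit_iff_ne_zero.mpr hdet)
  have : D = (D * U) * U⁻¹ := by rw [Matrix.mul_assoc, hinv, Matrix.mul_one]
  rw [hDU] at this
  simpa using this

lemma isQuantumBox_of_isLocalBox {N m v : ℕ} {p : Fin m → Fin m → Fin v → Fin v → ℝ}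
    (h : IsLocalBox N m v p) : IsQuantumBox N m v p := by
  obtain ⟨w, f, g, hw, hwsum, hf, hg, hfsum, hgsum, hp⟩ := h
  refine ⟨Matrix.diagonal (fun q : Fin N × Fin N => if q.1 = q.2 then (w q.1 : ℂ) else 0),
    fun x a => Matrix.diagonal (fun l => (f l x a : ℂ)),
    fun y b => Matrix.diagonal (fun l => (g l y b : ℂ)), ?_, ?_, ?_, ?_, ?_, ?_, ?_⟩
  · rw [Matrix.posSemidef_diagonal_iff]
    rintro ⟨i, j⟩
    dsimp only
    split
    · exact_mod_cast Complex.zero_le_real.mpr (hw i)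
    · exact le_refl _
  · rw [Matrix.trace_diagonal]
    rw [Fintype.sum_prod_type]
    simp only [Finset.sum_ite_eq, Finset.mem_univ, if_true]
    exact_mod_cast congrArg (Complex.ofReal) hwsum
  · intro x a
    rw [Matrix.posSemidef_diagonal_iff]
    intro l
    exact_mod_cast Complex.zero_le_real.mpr (hf l x a)
  · intro x
    ext i j
    rw [Matrix.sum_apply]
    by_cases hij : i = j
    · subst hij
      simp only [Matrix.diagonal_apply_eq, Matrix.one_apply_eq]
      rw [← Complex.ofReal_sum, hfsum i x]
      norm_num
    · simp [Matrix.diagonal_apply_ne _ hij, Matrix.one_apply_ne hij]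
  · intro y b
    rw [Matrix.posSemidef_diagonal_iff]
    intro l
    exact_mod_cast Complex.zero_le_real.mpr (hg l y b)
  · intro y
    ext i j
    rw [Matrix.sum_apply]
    by_cases hij : i = j
    · subst hij
      simp only [Matrix.diagonal_apply_eq, Matrix.one_apply_eq]
      rw [← Complex.ofReal_sum, hgsum i y]
      norm_num
    · simp [Matrix.diagonal_apply_ne _ hij, Matrix.one_apply_ne hij]
  · intro x y a b
    rw [hp]
    rw [Matrix.diagonal_kronecker_diagonal, Matrix.diagonal_mul_diagonal,
      Matrix.trace_diagonal]
    rw [Fintype.sum_prod_type]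
    push_cast
    simp only [ite_mul, zero_mul, Finset.sum_ite_eq, Finset.mem_univ, if_true]
    ring_nf

/-- deterministic response function outputting `t x`. -/
def detf (t : Fin 2 → Fin 2) : Fin 2 → Fin 2 → ℝ := fun x a => if a = t x then 1 else 0

lemma detf_nonneg (t : Fin 2 → Fin 2) : ∀ x a, 0 ≤ detf t x a := by
  intro x a; unfold detf; split <;> norm_num

lemma detf_sum (t : Fin 2 → Fin 2) : ∀ x, ∑ a, detf t x a = 1 := by
  intro x
  simp [detf]

lemma pair_mixture_local (c c' : ℝ) (hc : 0 ≤ c) (hc' : 0 ≤ c') (hsum : c + c' = 1)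
    (s t s' t' : Fin 2 → Fin 2) :
    IsLocalBox 2 2 2 (fun x y a b =>
      c * (detf s x a * detf t y b) + c' * (detf s' x a * detf t' y b)) := by
  refine ⟨![c, c'], ![detf s, detf s'], ![detf t, detf t'], ?_, ?_, ?_, ?_, ?_, ?_, ?_⟩
  · intro l; fin_cases l <;> simpa
  · rw [Fin.sum_univ_two]; simpa using hsum
  · intro l; fin_cases l <;> simpa using detf_nonneg _
  · intro l; fin_cases l <;> simpa using detf_nonneg _
  · intro l; fin_cases l <;> simpa using detf_sum _
  · intro l; fin_cases l <;> simpa using detf_sum _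
  · intro x y a b
    rw [Fin.sum_univ_two]
    simp [mul_assoc]

/-! ### The easy memberships -/

lemma quantum_P1 : IsQuantumBox 2 2 2 P1 := by
  apply isQuantumBox_of_isLocalBox
  have h := pair_mixture_local 1 0 (by norm_num) (by norm_num) (by norm_num)
    (fun _ => 1) (fun _ => 1) (fun _ => 1) (fun _ => 1)
  convert h using 1
  funext x y a b
  simp [P1, detf]
  by_cases ha : a = 1 <;> by_cases hb : b = 1 <;> simp [ha, hb]

lemma quantum_P3 : IsQuantumBox 2 2 2 P3 := by
  apply isQuantumBox_of_isLocalBox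
  have h := pair_mixture_local 1 0 (by norm_num) (by norm_num) (by norm_num)
    (fun x => 1 - x) (fun y => 1 - y) (fun _ => 1) (fun _ => 1)
  convert h using 1
  funext x y a b
  simp [P3, detf]
  by_cases ha : a = 1 - x <;> by_cases hb : b = 1 - y <;> simp [ha, hb]

lemma quantum_P4 : IsQuantumBox 2 2 2 P4 := by
  apply isQuantumBox_of_isLocalBox
  have h := pair_mixture_local 1 0 (by norm_num) (by norm_num) (by norm_num)
    (fun x => x) (fun y => y) (fun _ => 1) (fun _ => 1)
  convert h using 1
  funext x y a b
  simp [P4, detf]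
  by_cases ha : a = x <;> by_cases hb : b = y <;> simp [ha, hb]

/-! ### The forward impossibility -/

lemma not_quantum_mixture (c1 c3 c4 : ℝ) (hc : c1 + c3 + c4 = 1)
    (h1 : c1 ≠ 0) (h3 : c3 ≠ 0) (h4 : c4 ≠ 0) :
    ¬ IsQuantumBox 2 2 2 (c1 • P1 + c3 • P3 + c4 • P4) := by
  rintro ⟨ρ, A, B, hρ, hρtr, hA, hAsum, hB, hBsum, htr⟩
  -- individual probability values
  have hbox : ∀ x y a b, (ρ * (A x a ⊗ₖ B y b)).trace =
      ((c1 * P1 x y a b + c3 * P3 x y a b + c4 * P4 x y a b : ℝ) : ℂ) := by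
    intro x y a b
    rw [htr]
    norm_num [Pi.add_apply, Pi.smul_apply, smul_eq_mul]
  have q0001 : (ρ * (A 0 0 ⊗ₖ B 0 1)).trace = 0 := by
    have h := hbox 0 0 0 1; norm_num [P1, P3, P4] at h; exact h
  have q1101 : (ρ * (A 1 0 ⊗ₖ B 1 1)).trace = 0 := by
    have h := hbox 1 1 0 1; norm_num [P1, P3, P4] at h; exact h
  have q0100 : (ρ * (A 0 0 ⊗ₖ B 1 0)).trace = 0 := by
    have h := hbox 0 1 0 0; norm_num [P1, P3, P4] at h; exact h
  have q1000 : (ρ * (A 1 0 ⊗ₖ B 0 0)).trace = 0 := by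
    have h := hbox 1 0 0 0; norm_num [P1, P3, P4] at h; exact h
  have q0101 : (ρ * (A 0 0 ⊗ₖ B 1 1)).trace = (c4 : ℂ) := by
    have h := hbox 0 1 0 1; norm_num [P1, P3, P4] at h; exact h
  have q1001 : (ρ * (A 1 0 ⊗ₖ B 0 1)).trace = (c3 : ℂ) := by
    have h := hbox 1 0 0 1; norm_num [P1, P3, P4] at h; exact h
  have q0000 : (ρ * (A 0 0 ⊗ₖ B 0 0)).trace = (c4 : ℂ) := by
    have h := hbox 0 0 0 0; norm_num [P1, P3, P4] at h; exact h
  have q0010 : (ρ * (A 0 1 ⊗ₖ B 0 0)).trace = 0 := by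
    have h := hbox 0 0 1 0; norm_num [P1, P3, P4] at h; exact h
  have q0111 : (ρ * (A 0 1 ⊗ₖ B 1 1)).trace = (c1 : ℂ) := by
    have h := hbox 0 1 1 1; norm_num [P1, P3, P4] at h; exact h
  -- kill conditions
  have k1 := mul_eq_zero_of_trace_eq_zero hρ (posSemidef_kron (hA 0 0) (hB 0 1)) q0001
  have k2 := mul_eq_zero_of_trace_eq_zero hρ (posSemidef_kron (hA 0 0) (hB 1 0)) q0100
  have k3 := mul_eq_zero_of_trace_eq_zero hρ (posSemidef_kron (hA 1 0) (hB 1 1)) q1101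
  have k4 := mul_eq_zero_of_trace_eq_zero hρ (posSemidef_kron (hA 1 0) (hB 0 0)) q1000
  -- marginal traces
  have hBone : (1 : Matrix (Fin 2) (Fin 2) ℂ) = B 0 0 + B 0 1 := by
    rw [← hBsum 0, Fin.sum_univ_two]
  have hBone' : (1 : Matrix (Fin 2) (Fin 2) ℂ) = B 1 0 + B 1 1 := by
    rw [← hBsum 1, Fin.sum_univ_two]
  have hAone : (1 : Matrix (Fin 2) (Fin 2) ℂ) = A 0 0 + A 0 1 := by
    rw [← hAsum 0, Fin.sum_univ_two]
  have hTa0 : (ρ * (A 0 0 ⊗ₖ (1 : Matrix (Fin 2) (Fin 2) ℂ))).trace = (c4 : ℂ) := by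
    rw [hBone', Matrix.kronecker_add, Matrix.mul_add, Matrix.trace_add, q0100, q0101,
      zero_add]
  have hTa0' : (ρ * (A 1 0 ⊗ₖ (1 : Matrix (Fin 2) (Fin 2) ℂ))).trace = (c3 : ℂ) := by
    rw [hBone, Matrix.kronecker_add, Matrix.mul_add, Matrix.trace_add, q1000, q1001,
      zero_add]
  have hTb0 : (ρ * ((1 : Matrix (Fin 2) (Fin 2) ℂ) ⊗ₖ B 0 0)).trace = (c4 : ℂ) := by
    rw [hAone, Matrix.add_kronecker, Matrix.mul_add, Matrix.trace_add, q0000, q0010,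
      add_zero]
  have hTb1' : (ρ * ((1 : Matrix (Fin 2) (Fin 2) ℂ) ⊗ₖ B 1 1)).trace = (c4 + c1 : ℂ) := by
    rw [hAone, Matrix.add_kronecker, Matrix.mul_add, Matrix.trace_add, q0101, q0111]
  -- the conjugated states and their partial traces
  set R : Matrix (Fin 2 × Fin 2) (Fin 2 × Fin 2) ℂ :=
    (A 0 0 ⊗ₖ 1) * ρ * (A 0 0 ⊗ₖ 1) with hRdef
  set R' : Matrix (Fin 2 × Fin 2) (Fin 2 × Fin 2) ℂ :=
    (A 1 0 ⊗ₖ 1) * ρ * (A 1 0 ⊗ₖ 1) with hR'def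
  have herm0 : (A 0 0 ⊗ₖ (1 : Matrix (Fin 2) (Fin 2) ℂ)).IsHermitian := by
    rw [Matrix.IsHermitian, kron_conjTranspose, (hA 0 0).1.eq, Matrix.conjTranspose_one]
  have herm1 : (A 1 0 ⊗ₖ (1 : Matrix (Fin 2) (Fin 2) ℂ)).IsHermitian := by
    rw [Matrix.IsHermitian, kron_conjTranspose, (hA 1 0).1.eq, Matrix.conjTranspose_one]
  have kron_mul : ∀ (M N : Matrix (Fin 2) (Fin 2) ℂ),
      ((1 : Matrix (Fin 2) (Fin 2) ℂ) ⊗ₖ M) * (N ⊗ₖ (1 : Matrix (Fin 2) (Fin 2) ℂ))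
        = N ⊗ₖ M := by
    intro M N
    rw [← Matrix.mul_kronecker_mul, Matrix.one_mul, Matrix.mul_one]
  have hkill : ∀ (a b : Matrix (Fin 2) (Fin 2) ℂ), (a ⊗ₖ b) * ρ = 0 →
      ((1 : Matrix (Fin 2) (Fin 2) ℂ) ⊗ₖ b) * ((a ⊗ₖ 1) * ρ * (a ⊗ₖ 1)) = 0 := by
    intro a b h
    calc (1 ⊗ₖ b) * ((a ⊗ₖ 1) * ρ * (a ⊗ₖ 1))
        = ((1 ⊗ₖ b) * (a ⊗ₖ 1)) * (ρ * (a ⊗ₖ 1)) := by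
          simp only [Matrix.mul_assoc]
      _ = (a ⊗ₖ b) * (ρ * (a ⊗ₖ 1)) := by rw [kron_mul]
      _ = ((a ⊗ₖ b) * ρ) * (a ⊗ₖ 1) := by rw [Matrix.mul_assoc]
      _ = 0 := by rw [h, Matrix.zero_mul]
  have hR1 : ((1 : Matrix (Fin 2) (Fin 2) ℂ) ⊗ₖ B 0 1) * R = 0 := hkill _ _ k1.2
  have hR2 : ((1 : Matrix (Fin 2) (Fin 2) ℂ) ⊗ₖ B 1 0) * R = 0 := hkill _ _ k2.2
  have hR3 : ((1 : Matrix (Fin 2) (Fin 2) ℂ) ⊗ₖ B 1 1) * R' = 0 := hkill _ _ k3.2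
  have hR4 : ((1 : Matrix (Fin 2) (Fin 2) ℂ) ⊗ₖ B 0 0) * R' = 0 := hkill _ _ k4.2
  -- nonvanishing traces
  have hTrR : R.trace ≠ 0 := by
    have e : R.trace = (ρ * ((A 0 0 ⊗ₖ 1) * (A 0 0 ⊗ₖ 1))).trace := by
      rw [hRdef, Matrix.trace_mul_cycle, Matrix.trace_mul_comm]
    rw [e]
    exact trace_mul_ne_zero_of_sq hρ herm0
      (by rw [hTa0]; exact Complex.ofReal_ne_zero.mpr h4)
  have hTrR' : R'.trace ≠ 0 := by
    have e : R'.trace = (ρ * ((A 1 0 ⊗ₖ 1) * (A 1 0 ⊗ₖ 1))).trace := by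
      rw [hR'def, Matrix.trace_mul_cycle, Matrix.trace_mul_comm]
    rw [e]
    exact trace_mul_ne_zero_of_sq hρ herm1
      (by rw [hTa0']; exact Complex.ofReal_ne_zero.mpr h3)
  -- partial traces
  set σ : Matrix (Fin 2) (Fin 2) ℂ := ptrA R with hσdef
  set σ' : Matrix (Fin 2) (Fin 2) ℂ := ptrA R' with hσ'def
  have hσne : σ ≠ 0 := by
    intro h
    apply hTrR
    rw [← ptrA_trace R, ← hσdef, h, Matrix.trace_zero]
  have hσ'ne : σ' ≠ 0 := by
    intro h
    apply hTrR'
    rw [← ptrA_trace R', ← hσ'def, h, Matrix.trace_zero]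
  have hb1σ : B 0 1 * σ = 0 := by rw [hσdef, ← ptrA_one_kron_mul, hR1, ptrA_zero]
  have hb0'σ : B 1 0 * σ = 0 := by rw [hσdef, ← ptrA_one_kron_mul, hR2, ptrA_zero]
  have hb1'σ' : B 1 1 * σ' = 0 := by rw [hσ'def, ← ptrA_one_kron_mul, hR3, ptrA_zero]
  have hb0σ' : B 0 0 * σ' = 0 := by rw [hσ'def, ← ptrA_one_kron_mul, hR4, ptrA_zero]
  have hb1'σ : B 1 1 * σ = σ := by
    have h' : (B 1 0 + B 1 1) * σ = σ := by rw [← hBone', Matrix.one_mul]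
    rw [Matrix.add_mul, hb0'σ, zero_add] at h'
    exact h'
  have hb1σ' : B 0 1 * σ' = σ' := by
    have h' : (B 0 0 + B 0 1) * σ' = σ' := by rw [← hBone, Matrix.one_mul]
    rw [Matrix.add_mul, hb0σ', zero_add] at h'
    exact h'
  -- pick vectors in the ranges
  have hzex : ∀ (τ : Matrix (Fin 2) (Fin 2) ℂ), τ ≠ 0 → ∃ z, τ *ᵥ z ≠ 0 := by
    intro τ hτ
    by_contra h
    push_neg at h
    apply hτ
    ext i j
    have := congrFun (h (Pi.single j 1)) i
    simpa [Matrix.mulVec, dotProduct, Pi.single_apply] using this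
  obtain ⟨z, hz⟩ := hzex σ hσne
  obtain ⟨z', hz'⟩ := hzex σ' hσ'ne
  set u : Fin 2 → ℂ := σ *ᵥ z with hudef
  set u' : Fin 2 → ℂ := σ' *ᵥ z' with hu'def
  have hb1u : B 0 1 *ᵥ u = 0 := by
    rw [hudef, Matrix.mulVec_mulVec, hb1σ, Matrix.zero_mulVec]
  have hb1'u : B 1 1 *ᵥ u = u := by
    rw [hudef, Matrix.mulVec_mulVec, hb1'σ]
  have hb1u' : B 0 1 *ᵥ u' = u' := by
    rw [hu'def, Matrix.mulVec_mulVec, hb1σ']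
  have hb1'u' : B 1 1 *ᵥ u' = 0 := by
    rw [hu'def, Matrix.mulVec_mulVec, hb1'σ', Matrix.zero_mulVec]
  have hb0u' : B 0 0 *ᵥ u' = 0 := by
    rw [hu'def, Matrix.mulVec_mulVec, hb0σ', Matrix.zero_mulVec]
  -- orthogonality
  have hstar : ∀ (M : Matrix (Fin 2) (Fin 2) ℂ), M.IsHermitian → ∀ (w w' : Fin 2 → ℂ),
      star w ⬝ᵥ (M *ᵥ w') = star (M *ᵥ w) ⬝ᵥ w' := by
    intro M hM w w'
    rw [Matrix.dotProduct_mulVec, ← hM.eq, Matrix.vecMul_conjTranspose, star_star, hM.eq]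
  have huv : star u ⬝ᵥ u' = 0 := by
    rw [← hb1u', hstar _ (hB 0 1).1, hb1u]
    simp
  have hvu : star u' ⬝ᵥ u = 0 := by
    rw [← hb1'u, hstar _ (hB 1 1).1, hb1'u']
    simp
  -- the difference operator kills both vectors
  have hDu : (B 0 0 - B 1 1) *ᵥ u = 0 := by
    have h00 : B 0 0 *ᵥ u = u := by
      have h' : (B 0 0 + B 0 1) *ᵥ u = u := by rw [← hBone, Matrix.one_mulVec]
      rw [Matrix.add_mulVec, hb1u, add_zero] at h'
      exact h'
    rw [Matrix.sub_mulVec, h00, hb1'u, sub_self]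
  have hDu' : (B 0 0 - B 1 1) *ᵥ u' = 0 := by
    rw [Matrix.sub_mulVec, hb0u', hb1'u', sub_self]
  have hD0 := matrix_eq_zero_of_orthogonal_kernel _ u u' hz hz' huv hvu hDu hDu'
  have hBB : B 0 0 = B 1 1 := sub_eq_zero.mp hD0
  rw [hBB] at hTb0
  have hcontra : (c4 : ℂ) = c4 + c1 := hTb0.symm.trans hTb1'
  exact h1 (Complex.ofReal_eq_zero.mp (by linear_combination -hcontra))

lemma P1_eq (x y a b : Fin 2) :
    P1 x y a b = detf (fun _ => 1) x a * detf (fun _ => 1) y b := by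
  simp only [P1, detf]
  by_cases ha : a = 1 <;> by_cases hb : b = 1 <;> simp [ha, hb]

lemma P3_eq (x y a b : Fin 2) :
    P3 x y a b = detf (fun x => 1 - x) x a * detf (fun y => 1 - y) y b := by
  simp only [P3, detf]
  by_cases ha : a = 1 - x <;> by_cases hb : b = 1 - y <;> simp [ha, hb]

lemma P4_eq (x y a b : Fin 2) :
    P4 x y a b = detf (fun x => x) x a * detf (fun y => y) y b := by
  simp only [P4, detf]
  by_cases ha : a = x <;> by_cases hb : b = y <;> simp [ha, hb]

lemma mixture_quantum (c1 c3 c4 : ℝ) (h1 : 0 ≤ c1) (h3 : 0 ≤ c3) (h4 : 0 ≤ c4)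
    (hc : c1 + c3 + c4 = 1) (h0 : c1 = 0 ∨ c3 = 0 ∨ c4 = 0) :
    IsQuantumBox 2 2 2 (c1 • P1 + c3 • P3 + c4 • P4) := by
  apply isQuantumBox_of_isLocalBox
  rcases h0 with h0 | h0 | h0
  · have he : c1 • P1 + c3 • P3 + c4 • P4 = fun x y a b =>
        c3 * (detf (fun x => 1 - x) x a * detf (fun y => 1 - y) y b) +
        c4 * (detf (fun x => x) x a * detf (fun y => y) y b) := by
      funext x y a b
      simp only [Pi.add_apply, Pi.smul_apply, smul_eq_mul, P1_eq, P3_eq, P4_eq, h0]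
      ring
    rw [he]
    exact pair_mixture_local c3 c4 h3 h4 (by linarith) _ _ _ _
  · have he : c1 • P1 + c3 • P3 + c4 • P4 = fun x y a b =>
        c1 * (detf (fun _ => 1) x a * detf (fun _ => 1) y b) +
        c4 * (detf (fun x => x) x a * detf (fun y => y) y b) := by
      funext x y a b
      simp only [Pi.add_apply, Pi.smul_apply, smul_eq_mul, P1_eq, P3_eq, P4_eq, h0]
      ring
    rw [he]
    exact pair_mixture_local c1 c4 h1 h4 (by linarith) _ _ _ _
  · have he : c1 • P1 + c3 • P3 + c4 • P4 = fun x y a b =>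
        c1 * (detf (fun _ => 1) x a * detf (fun _ => 1) y b) +
        c3 * (detf (fun x => 1 - x) x a * detf (fun y => 1 - y) y b) := by
      funext x y a b
      simp only [Pi.add_apply, Pi.smul_apply, smul_eq_mul, P1_eq, P3_eq, P4_eq, h0]
      ring
    rw [he]
    exact pair_mixture_local c1 c3 h1 h3 (by linarith) _ _ _ _

theorem triangle_134_nonconvexity :
    IsQuantumBox 2 2 2 P1 ∧ IsQuantumBox 2 2 2 P3 ∧ IsQuantumBox 2 2 2 P4 ∧
    (∀ c1 c3 c4 : ℝ, 0 ≤ c1 → 0 ≤ c3 → 0 ≤ c4 → c1 + c3 + c4 = 1 →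
      (IsQuantumBox 2 2 2 (c1 • P1 + c3 • P3 + c4 • P4) ↔
        (c1 = 0 ∨ c3 = 0 ∨ c4 = 0))) ∧
    ¬ Convex ℝ {p : Fin 2 → Fin 2 → Fin 2 → Fin 2 → ℝ | IsQuantumBox 2 2 2 p} := by
  have hiff : ∀ c1 c3 c4 : ℝ, 0 ≤ c1 → 0 ≤ c3 → 0 ≤ c4 → c1 + c3 + c4 = 1 →
      (IsQuantumBox 2 2 2 (c1 • P1 + c3 • P3 + c4 • P4) ↔
        (c1 = 0 ∨ c3 = 0 ∨ c4 = 0)) := by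
    intro c1 c3 c4 h1 h3 h4 hc
    constructor
    · intro hq
      by_contra h0
      push_neg at h0
      exact not_quantum_mixture c1 c3 c4 hc h0.1 h0.2.1 h0.2.2 hq
    · exact mixture_quantum c1 c3 c4 h1 h3 h4 hc
  refine ⟨quantum_P1, quantum_P3, quantum_P4, hiff, ?_⟩
  intro hconv
  have hp : IsQuantumBox 2 2 2 ((2/3 : ℝ) • P1 + (1/3 : ℝ) • P3 + (0 : ℝ) • P4) :=
    (hiff (2/3) (1/3) 0 (by norm_num) (by norm_num) (by norm_num) (by norm_num)).mpr
      (Or.inr (Or.inr rfl))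
  have hq : IsQuantumBox 2 2 2 ((0 : ℝ) • P1 + (1/3 : ℝ) • P3 + (2/3 : ℝ) • P4) :=
    (hiff 0 (1/3) (2/3) (by norm_num) (by norm_num) (by norm_num) (by norm_num)).mpr
      (Or.inl rfl)
  have hmid := hconv hp hq (by norm_num : (0:ℝ) ≤ 1/2) (by norm_num : (0:ℝ) ≤ 1/2)
    (by norm_num)
  have hmid_eq : (1/2 : ℝ) • ((2/3 : ℝ) • P1 + (1/3 : ℝ) • P3 + (0 : ℝ) • P4) +
      (1/2 : ℝ) • ((0 : ℝ) • P1 + (1/3 : ℝ) • P3 + (2/3 : ℝ) • P4) =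
      (1/3 : ℝ) • P1 + (1/3 : ℝ) • P3 + (1/3 : ℝ) • P4 := by
    module
  rw [hmid_eq] at hmid
  have := (hiff (1/3) (1/3) (1/3) (by norm_num) (by norm_num) (by norm_num)
    (by norm_num)).mp hmid
  rcases this with h | h | h <;> norm_num at h
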